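/- If moreover the series ∑_{n=0}^∞ ε_n converges (i.e. C is a Hilbert–Schmidt operator), then ∑_{j=0}^∞ ‖(I − R) e_j‖² < ∞ and ∑_{j=0}^∞ ‖(I − R⁻¹)* e_j‖² < ∞; that is, both I − R and I − R⁻¹ are Hilbert–Schmidt operators. -/

import Mathlib

set_option maxHeartbeats 4000000

open ContinuousLinearMap

noncomputable section
namespace GrunskyHS

abbrev E2 : Type := lp (fun _ : ℕ => ℂ) 2

def ee (j : ℕ) : E2 := lp.single 2 j (1:ℂ)

lemma inner_ee_left (j : ℕ) (x : E2) : (inner ℂ (ee j) x : ℂ) = x j := by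
  rw [ee, lp.inner_single_left]
  simp [RCLike.inner_apply]

lemma eq_sum_of_support (k : ℕ) (x : E2) (hx : ∀ j, k < j → x j = 0) :
    x = ∑ i ∈ Finset.range (k+1), (x i : ℂ) • ee i := by
  apply lp.ext
  funext j
  rw [lp.coeFn_sum]
  simp only [Finset.sum_apply]
  by_cases hj : j ≤ k
  · rw [Finset.sum_eq_single j]
    · simp [lp.coeFn_smul, ee, lp.single_apply_self]
    · intro i hi hij
      simp [lp.coeFn_smul, ee, lp.single_apply_ne 2 i 1 (Ne.symm hij), Pi.single_apply, Ne.symm hij]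
    · intro h; exact absurd (Finset.mem_range.2 (Nat.lt_succ_of_le hj)) h
  · push_neg at hj
    rw [hx j hj]
    symm; apply Finset.sum_eq_zero
    intro i hi
    have : j ≠ i := by
      have := Finset.mem_range.1 hi; omega
    simp [lp.coeFn_smul, ee, lp.single_apply_ne 2 i 1 this, Pi.single_apply, this]

/-- coords-vanishing-beyond-k submodule -/
def V (k : ℕ) : Submodule ℂ E2 where
  carrier := {x : E2 | ∀ j, k < j → x j = 0}
  add_mem' := by
    intro a b ha hb j hj
    rw [lp.coeFn_add, Pi.add_apply, ha j hj, hb j hj, add_zero]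
  zero_mem' := by intro j hj; rfl
  smul_mem' := by
    intro c a ha j hj
    rw [lp.coeFn_smul, Pi.smul_apply, ha j hj, smul_zero]

lemma mem_V (k : ℕ) (x : E2) : x ∈ V k ↔ ∀ j, k < j → x j = 0 := Iff.rfl

instance Vfd (k : ℕ) : FiniteDimensional ℂ (V k) := by
  let f : V k →ₗ[ℂ] (Fin (k+1) → ℂ) :=
    { toFun := fun x i => (x : E2) (i : ℕ)
      map_add' := by
        intro a b; funext i
        show ((a:E2)+(b:E2)) (i:ℕ) = _
        rw [lp.coeFn_add]; rfl
      map_smul' := by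
        intro c a; funext i
        show (((c • a : V k) : E2)) (i:ℕ) = _
        rw [Submodule.coe_smul, lp.coeFn_smul]; rfl }
  have hf : Function.Injective f := by
    intro a b hab
    apply Subtype.ext
    apply lp.ext
    funext j
    by_cases hj : j ≤ k
    · have := congrFun hab ⟨j, Nat.lt_succ_of_le hj⟩
      exact this
    · push_neg at hj
      rw [a.2 j hj, b.2 j hj]
  exact FiniteDimensional.of_injective f hf

variable {R S : E2 →L[ℂ] E2}

lemma apply_tri_sum (htri : ∀ j k : ℕ, k < j → (R (ee k)) j = 0)
    (k : ℕ) (x : E2) (hx : ∀ j, k < j → x j = 0) {j : ℕ} (hj : k < j) :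
    (R x) j = 0 := by
  rw [eq_sum_of_support k x hx, map_sum, lp.coeFn_sum, Finset.sum_apply]
  apply Finset.sum_eq_zero
  intro i hi
  have hik : i < j := lt_of_le_of_lt (Nat.le_of_lt_succ (Finset.mem_range.1 hi)) hj
  rw [map_smul, lp.coeFn_smul, Pi.smul_apply, htri j i hik, smul_zero]

lemma S_tri (htri : ∀ j k : ℕ, k < j → (R (ee k)) j = 0)
    (hSR : ∀ x, S (R x) = x) :
    ∀ j k : ℕ, k < j → (S (ee k)) j = 0 := by
  intro j k hjk
  have hVfd := Vfd k
  have hmap : ∀ x ∈ V k, R x ∈ V k := by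
    intro x hx
    rw [mem_V] at hx ⊢
    intro j hj
    exact apply_tri_sum htri k x hx hj
  let Rres : V k →ₗ[ℂ] V k := (R : E2 →ₗ[ℂ] E2).restrict hmap
  have hinj : Function.Injective Rres := by
    intro a b hab
    have : R (a : E2) = R (b : E2) := congrArg Subtype.val hab
    have := congrArg S this
    rw [hSR, hSR] at this
    exact Subtype.ext this
  have hsurj := (LinearMap.injective_iff_surjective (f := Rres)).1 hinj
  have hek : ee k ∈ V k := by
    rw [mem_V]; intro j hj; exact lp.single_apply_ne 2 k 1 (by omega)
  obtain ⟨v, hv⟩ := hsurj ⟨ee k, hek⟩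
  have hRv : R (v : E2) = ee k := congrArg Subtype.val hv
  have hSe : S (ee k) = (v : E2) := by rw [← hRv, hSR]
  rw [hSe]
  exact (mem_V k v).1 v.2 j hjk

lemma diag_mul (htri : ∀ j k : ℕ, k < j → (R (ee k)) j = 0)
    (hStri : ∀ j k : ℕ, k < j → (S (ee k)) j = 0)
    (hRS : ∀ x, R (S x) = x) (k : ℕ) :
    ((S (ee k)) k : ℂ) * (R (ee k)) k = 1 := by
  have h1 : (R (S (ee k))) k = 1 := by rw [hRS]; exact lp.single_apply_self 2 k 1
  rw [eq_sum_of_support k (S (ee k)) (fun j hj => hStri j k hj)] at h1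
  rw [map_sum, lp.coeFn_sum, Finset.sum_apply] at h1
  rw [Finset.sum_eq_single k] at h1
  · rw [map_smul, lp.coeFn_smul, Pi.smul_apply, smul_eq_mul] at h1
    exact h1
  · intro i hi hik
    have : i < k := lt_of_le_of_ne (Nat.le_of_lt_succ (Finset.mem_range.1 hi)) hik
    rw [map_smul, lp.coeFn_smul, Pi.smul_apply, htri k i this, smul_zero]
  · intro h; exact absurd (Finset.mem_range.2 (Nat.lt_succ_self k)) h

end GrunskyHS
end

open GrunskyHS in
/-- Corollary 2.6 (Hilbert–Schmidt part): if `∑ ε_n < ∞` (i.e. `C` is Hilbert–Schmidt),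
then `∑_j ‖(I − R) e_j‖² < ∞` and `∑_j ‖(I − R⁻¹)* e_j‖² < ∞`,
i.e. both `I − R` and `I − R⁻¹` are Hilbert–Schmidt. -/
theorem grunsky_hilbert_schmidt
    (C R Rinv : lp (fun _ : ℕ => ℂ) 2 →L[ℂ] lp (fun _ : ℕ => ℂ) 2)
    (hC : ‖C‖ < 1)
    (hRtri : ∀ j k : ℕ, k < j → (inner ℂ (lp.single 2 j (1:ℂ)) (R (lp.single 2 k (1:ℂ))) : ℂ) = 0)
    (hRdiagRe : ∀ n : ℕ,
      0 < (inner ℂ (lp.single 2 n (1:ℂ)) (R (lp.single 2 n (1:ℂ))) : ℂ).re)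
    (hRdiagIm : ∀ n : ℕ,
      (inner ℂ (lp.single 2 n (1:ℂ)) (R (lp.single 2 n (1:ℂ))) : ℂ).im = 0)
    (hM : adjoint R ∘L R = 1 - adjoint C ∘L C)
    (hRinv : R ∘L Rinv = 1 ∧ Rinv ∘L R = 1)
    (ε : ℕ → ℝ) (hε : ∀ n, ε n = ‖C (lp.single 2 n (1:ℂ))‖^2)
    (hHS : Summable ε) :
    Summable (fun j : ℕ => ‖(1 - R) (lp.single 2 j (1:ℂ))‖^2) ∧
    Summable (fun j : ℕ => ‖(adjoint (1 - Rinv)) (lp.single 2 j (1:ℂ))‖^2) := by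
  have hεnn : ∀ j, 0 ≤ ε j := fun j => (hε j) ▸ sq_nonneg _
  -- basic applications of the inverse hypotheses
  have hRS : ∀ x, R (Rinv x) = x := fun x => by
    have := congrArg (fun A : E2 →L[ℂ] E2 => A x) hRinv.1
    simpa using this
  have hSR : ∀ x, Rinv (R x) = x := fun x => by
    have := congrArg (fun A : E2 →L[ℂ] E2 => A x) hRinv.2
    simpa using this
  -- coordinate triangularity of R and Rinv
  have htriR : ∀ j k : ℕ, k < j → (R (ee k)) j = 0 := fun j k h => by
    rw [← inner_ee_left]; exact hRtri j k h
  have hStri : ∀ j k : ℕ, k < j → (Rinv (ee k)) j = 0 :=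
    S_tri htriR hSR
  -- adjoint facts
  have hadj_one : adjoint (1 : E2 →L[ℂ] E2) = 1 := by
    rw [ContinuousLinearMap.one_def, adjoint_id]
  have hadj1 : adjoint Rinv ∘L adjoint R = 1 := by
    rw [← adjoint_comp, hRinv.1, hadj_one]
  have hadj2 : adjoint R ∘L adjoint Rinv = 1 := by
    rw [← adjoint_comp, hRinv.2, hadj_one]
  -- operator identity:  P = 1 + D + D P D  where  P = Rinv (Rinv)* and D = C* C
  set D : E2 →L[ℂ] E2 := adjoint C ∘L C with hD
  set P : E2 →L[ℂ] E2 := Rinv ∘L adjoint Rinv with hP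
  have hM' : adjoint R * R = 1 - D := hM
  have hRS' : R * Rinv = 1 := hRinv.1
  have hSR' : Rinv * R = 1 := hRinv.2
  have hadj1' : adjoint Rinv * adjoint R = 1 := hadj1
  have hadj2' : adjoint R * adjoint Rinv = 1 := hadj2
  have hP' : P = Rinv * adjoint Rinv := hP
  have h1 : (1 - D) * P = 1 := by
    rw [← hM', hP']
    rw [mul_assoc, ← mul_assoc R Rinv, hRS', one_mul, hadj2']
  have h2 : P * (1 - D) = 1 := by
    rw [← hM', hP']
    rw [mul_assoc, ← mul_assoc (adjoint Rinv) (adjoint R) R, hadj1', one_mul, hSR']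
  have e1 : P = 1 + D * P := by
    rw [sub_mul, one_mul] at h1
    exact eq_add_of_sub_eq h1
  have e2 : P = 1 + P * D := by
    rw [mul_sub, mul_one] at h2
    exact eq_add_of_sub_eq h2
  have hKey : P = 1 + D + D * P * D := by
    calc P = 1 + D * P := e1
      _ = 1 + D * (1 + P * D) := by rw [← e2]
      _ = 1 + D + D * P * D := by rw [mul_add, mul_one, ← mul_assoc, ← add_assoc]
  -- real part conversions
  have hinner_self : ∀ x : E2, (inner ℂ x x : ℂ).re = ‖x‖^2 := fun x => by
    have := @inner_self_eq_norm_sq ℂ _ _ _ _ x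
    simpa [RCLike.re_to_complex] using this
  -- row identity
  have hrow : ∀ j, ‖adjoint Rinv (ee j)‖^2
      = 1 + ε j + ‖adjoint Rinv (D (ee j))‖^2 := by
    intro j
    have hL : (inner ℂ (adjoint Rinv (ee j)) (adjoint Rinv (ee j)) : ℂ)
        = inner ℂ (ee j) (P (ee j)) := by
      rw [adjoint_inner_left]; rfl
    have hPe : P (ee j) = ee j + D (ee j) + D (Rinv (adjoint Rinv (D (ee j)))) := by
      have := congrArg (fun A : E2 →L[ℂ] E2 => A (ee j)) hKey
      simpa [ContinuousLinearMap.mul_apply, hP] using this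
    have hsplit : (inner ℂ (ee j) (P (ee j)) : ℂ)
        = inner ℂ (ee j) (ee j) + inner ℂ (ee j) (D (ee j))
          + inner ℂ (ee j) (D (Rinv (adjoint Rinv (D (ee j))))) := by
      rw [hPe, inner_add_right, inner_add_right]
    have t1 : (inner ℂ (ee j) (ee j) : ℂ) = 1 := by
      rw [inner_ee_left, ee, lp.single_apply_self]
    have t2 : (inner ℂ (ee j) (D (ee j)) : ℂ) = inner ℂ (C (ee j)) (C (ee j)) := by
      show (inner ℂ (ee j) (adjoint C (C (ee j))) : ℂ) = _
      rw [adjoint_inner_right]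
    have t3 : (inner ℂ (ee j) (D (Rinv (adjoint Rinv (D (ee j))))) : ℂ)
        = inner ℂ (adjoint Rinv (D (ee j))) (adjoint Rinv (D (ee j))) := by
      show (inner ℂ (ee j) (adjoint C (C (Rinv (adjoint Rinv (D (ee j)))))) : ℂ) = _
      rw [adjoint_inner_right, ← adjoint_inner_left,
        show adjoint C (C (ee j)) = D (ee j) from rfl, ← adjoint_inner_left]
    have := congrArg Complex.re (hL.trans (hsplit.trans (by rw [t1, t2, t3])))
    rw [hinner_self, Complex.add_re, Complex.add_re, hinner_self, hinner_self] at this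
    rw [this, hε j, Complex.one_re]
    rfl
  -- column identity : ‖R e_j‖² = 1 - ε j
  have hcol : ∀ j, ‖R (ee j)‖^2 = 1 - ε j := by
    intro j
    have hL : (inner ℂ (R (ee j)) (R (ee j)) : ℂ)
        = inner ℂ (ee j) ((1 - D) (ee j)) := by
      rw [← adjoint_inner_right, ← hM]; rfl
    have hsplit : (inner ℂ (ee j) ((1 - D) (ee j)) : ℂ)
        = inner ℂ (ee j) (ee j) - inner ℂ (C (ee j)) (C (ee j)) := by
      rw [ContinuousLinearMap.sub_apply, ContinuousLinearMap.one_apply, inner_sub_right]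
      congr 1
      show (inner ℂ (ee j) (adjoint C (C (ee j))) : ℂ) = _
      rw [adjoint_inner_right]
    have t1 : (inner ℂ (ee j) (ee j) : ℂ) = 1 := by
      rw [inner_ee_left, ee, lp.single_apply_self]
    have := congrArg Complex.re (hL.trans hsplit)
    rw [hinner_self, Complex.sub_re, t1, Complex.one_re, hinner_self] at this
    rw [this, hε j]
    rfl
  -- norm expansion
  have hee1 : ∀ j, ‖ee j‖ = 1 := by
    intro j
    have h1 : (inner ℂ (ee j) (ee j) : ℂ) = 1 := by
      rw [inner_ee_left, ee, lp.single_apply_self]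
    have h2 := hinner_self (ee j)
    rw [h1] at h2
    simp only [Complex.one_re] at h2
    nlinarith [norm_nonneg (ee j)]
  have hns : ∀ x y : E2, ‖x - y‖^2 = ‖x‖^2 - 2 * (inner ℂ x y : ℂ).re + ‖y‖^2 := fun x y => by
    have := @norm_sub_sq ℂ _ _ _ _ x y
    simpa [RCLike.re_to_complex] using this
  -- diagonal of R is real
  obtain ⟨r, hrdef⟩ : ∃ r : ℕ → ℝ, ∀ j, r j = (inner ℂ (ee j) (R (ee j)) : ℂ).re :=
    ⟨_, fun j => rfl⟩
  have hrdiag : ∀ j, (inner ℂ (ee j) (R (ee j)) : ℂ) = (r j : ℂ) := by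
    intro j
    apply Complex.ext
    · rw [hrdef, Complex.ofReal_re]
    · rw [Complex.ofReal_im]
      exact hRdiagIm j
  have hrpos : ∀ j, 0 < r j := by
    intro j
    rw [hrdef]
    exact hRdiagRe j
  have hr1 : ∀ j, r j ≤ 1 := by
    intro j
    have hle : ‖(inner ℂ (ee j) (R (ee j)) : ℂ)‖ ≤ ‖ee j‖ * ‖R (ee j)‖ :=
      norm_inner_le_norm (ee j) (R (ee j))
    have hre : r j ≤ ‖(inner ℂ (ee j) (R (ee j)) : ℂ)‖ := by
      rw [hrdef]
      exact (le_abs_self _).trans (Complex.abs_re_le_norm _)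
    have hRe1 : ‖R (ee j)‖ ≤ 1 := by
      nlinarith [hcol j, hεnn j, norm_nonneg (R (ee j))]
    rw [hee1 j, one_mul] at hle
    linarith
  -- the diagonal of Rinv
  obtain ⟨sd, hsdef⟩ : ∃ sd : ℕ → ℂ, ∀ j, sd j = (Rinv (ee j)) j := ⟨_, fun j => rfl⟩
  have hdm : ∀ j, sd j * (r j : ℂ) = 1 := by
    intro j
    have h0 := diag_mul htriR hStri hRS j
    rw [hsdef, ← hrdiag j, inner_ee_left j (R (ee j))]
    exact h0
  obtain ⟨t, htdef⟩ : ∃ t : ℕ → ℝ, ∀ j, t j = (r j)⁻¹ := ⟨_, fun j => rfl⟩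
  have htr : ∀ j, t j * r j = 1 := fun j =>
    (htdef j) ▸ inv_mul_cancel₀ (ne_of_gt (hrpos j))
  have ht1 : ∀ j, 1 ≤ t j := by
    intro j
    have := htr j
    nlinarith [hrpos j, hr1 j]
  have hsval : ∀ j, sd j = ((t j : ℝ) : ℂ) := by
    intro j
    rw [htdef j, Complex.ofReal_inv]
    exact eq_inv_of_mul_eq_one_left (hdm j)
  -- μ and its bound
  obtain ⟨c, hcdef⟩ : ∃ c : ℝ, c = 1 + (‖adjoint Rinv‖ * ‖adjoint C‖)^2 := ⟨_, rfl⟩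
  have hc0 : 0 ≤ c := by rw [hcdef]; positivity
  obtain ⟨μ, hμdef⟩ : ∃ μ : ℕ → ℝ, ∀ j, μ j = ε j + ‖adjoint Rinv (D (ee j))‖^2 :=
    ⟨_, fun j => rfl⟩
  have hμnn : ∀ j, 0 ≤ μ j := fun j =>
    (hμdef j) ▸ add_nonneg (hεnn j) (sq_nonneg _)
  have hμc : ∀ j, μ j ≤ c * ε j := by
    intro j
    have h1 : ‖adjoint Rinv (D (ee j))‖ ≤ ‖adjoint Rinv‖ * ‖D (ee j)‖ :=
      (adjoint Rinv).le_opNorm _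
    have h2 : ‖D (ee j)‖ ≤ ‖adjoint C‖ * ‖C (ee j)‖ := by
      show ‖adjoint C (C (ee j))‖ ≤ _
      exact (adjoint C).le_opNorm _
    have hE : ε j = ‖C (ee j)‖^2 := hε j
    have hn1 : 0 ≤ ‖adjoint Rinv‖ := norm_nonneg _
    have hn2 : 0 ≤ ‖adjoint C‖ := norm_nonneg _
    have hn3 : 0 ≤ ‖C (ee j)‖ := norm_nonneg _
    have hn4 : 0 ≤ ‖D (ee j)‖ := norm_nonneg _
    have hn5 : 0 ≤ ‖adjoint Rinv (D (ee j))‖ := norm_nonneg _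
    have ha : ‖adjoint Rinv (D (ee j))‖ ≤ ‖adjoint Rinv‖ * ‖adjoint C‖ * ‖C (ee j)‖ :=
      h1.trans (by rw [mul_assoc]; exact mul_le_mul_of_nonneg_left h2 hn1)
    have ha2 : ‖adjoint Rinv (D (ee j))‖^2 ≤ (‖adjoint Rinv‖ * ‖adjoint C‖ * ‖C (ee j)‖)^2 :=
      pow_le_pow_left₀ hn5 ha 2
    rw [hμdef, hcdef, hE]
    nlinarith [ha2]
  have hrow' : ∀ j, ‖adjoint Rinv (ee j)‖^2 = 1 + μ j := by
    intro j
    rw [hμdef, hrow j]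
    ring
  have ht2 : ∀ j, (t j)^2 ≤ 1 + μ j := by
    intro j
    have hip : (inner ℂ (adjoint Rinv (ee j)) (ee j) : ℂ) = sd j := by
      rw [adjoint_inner_left, inner_ee_left, hsdef]
    have hle : ‖(inner ℂ (adjoint Rinv (ee j)) (ee j) : ℂ)‖
        ≤ ‖adjoint Rinv (ee j)‖ * ‖ee j‖ := norm_inner_le_norm _ _
    rw [hip, hsval j, hee1 j, mul_one] at hle
    have habs : ‖((t j : ℝ) : ℂ)‖ = t j := by
      rw [Complex.norm_real]
      exact abs_of_nonneg (le_trans zero_le_one (ht1 j))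
    rw [habs] at hle
    calc (t j)^2 ≤ ‖adjoint Rinv (ee j)‖^2 :=
          pow_le_pow_left₀ (le_trans zero_le_one (ht1 j)) hle 2
      _ = 1 + μ j := hrow' j
  -- Part 1
  have part1 : Summable (fun j : ℕ => ‖(1 - R) (lp.single 2 j (1:ℂ))‖^2) := by
    apply Summable.of_nonneg_of_le (fun j => sq_nonneg _) (fun j => ?_)
      (hHS.mul_left (2*c + 1))
    have happ : (1 - R) (lp.single 2 j (1:ℂ)) = ee j - R (ee j) := by
      rw [ContinuousLinearMap.sub_apply, ContinuousLinearMap.one_apply]; rfl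
    rw [happ, hns, hrdiag j, Complex.ofReal_re, hee1 j, hcol j]
    have h2r : 2 - 2 * r j ≤ μ j := by
      nlinarith [ht2 j, htr j, ht1 j, hrpos j, hr1 j]
    nlinarith [hμc j, hεnn j, hc0]
  -- Part 2
  have hadjsub : adjoint (1 - Rinv) = 1 - adjoint Rinv := by
    rw [map_sub, hadj_one]
  have part2 : Summable (fun j : ℕ => ‖(adjoint (1 - Rinv)) (lp.single 2 j (1:ℂ))‖^2) := by
    apply Summable.of_nonneg_of_le (fun j => sq_nonneg _) (fun j => ?_)
      (hHS.mul_left c)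
    have happ : (adjoint (1 - Rinv)) (lp.single 2 j (1:ℂ))
        = ee j - adjoint Rinv (ee j) := by
      rw [hadjsub, ContinuousLinearMap.sub_apply, ContinuousLinearMap.one_apply]; rfl
    have hret : (inner ℂ (ee j) (adjoint Rinv (ee j)) : ℂ).re = t j := by
      rw [adjoint_inner_right, ← inner_conj_symm, inner_ee_left]
      show ((starRingEnd ℂ) ((Rinv (ee j)) j)).re = t j
      rw [← hsdef j, hsval j, Complex.conj_ofReal, Complex.ofReal_re]
    rw [happ, hns, hret, hee1 j, hrow' j]
    have := ht1 j
    have := hμc j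
    nlinarith [hεnn j, hc0]
  exact ⟨part1, part2⟩
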